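/- The 15-point set in PG(2,16) given by the columns (1:0:0), (0:1:0), (0:0:1), (1:1:1), (1:0:11), (1:1:8), (1:2:5), (1:2:10), (1:4:10), (1:9:2), (1:9:8), (1:11:2), (1:11:11), (1:13:1), (1:13:12) — where field elements are powers of a primitive root α satisfying α^4 + α^3 + 1 = 0 (with i denoting α^{i-1} for i ≥ 1) — is a (15,3)-arc, i.e., no four of these points are collinear. -/

import Mathlib

open Matrix

namespace Arc15Aux

abbrev V : Type := Bool × Bool × Bool × Bool

def kzero : V := (false, false, false, false)
def kone : V := (true, false, false, false)
def ka : V := (false, true, false, false)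

def kadd (a b : V) : V := (xor a.1 b.1, xor a.2.1 b.2.1, xor a.2.2.1 b.2.2.1, xor a.2.2.2 b.2.2.2)

def kmul (a b : V) : V :=
  let c0 := a.1 && b.1
  let c1 := xor (a.1 && b.2.1) (a.2.1 && b.1)
  let c2 := xor (a.1 && b.2.2.1) (xor (a.2.1 && b.2.1) (a.2.2.1 && b.1))
  let c3 := xor (a.1 && b.2.2.2) (xor (a.2.1 && b.2.2.1) (xor (a.2.2.1 && b.2.1) (a.2.2.2 && b.1)))
  let c4 := xor (a.2.1 && b.2.2.2) (xor (a.2.2.1 && b.2.2.1) (a.2.2.2 && b.2.1))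
  let c5 := xor (a.2.2.1 && b.2.2.2) (a.2.2.2 && b.2.2.1)
  let c6 := a.2.2.2 && b.2.2.2
  (xor c0 (xor c4 (xor c5 c6)), xor c1 (xor c5 c6), xor c2 c6, xor c3 (xor c4 (xor c5 c6)))

def kpow : ℕ → V
  | 0 => kone
  | n+1 => kmul ka (kpow n)

def kdet (u v w : Fin 3 → V) : V :=
  kadd (kmul (u 0) (kmul (v 1) (w 2)))
    (kadd (kmul (u 0) (kmul (v 2) (w 1)))
      (kadd (kmul (u 1) (kmul (v 0) (w 2)))
        (kadd (kmul (u 1) (kmul (v 2) (w 0)))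
          (kadd (kmul (u 2) (kmul (v 0) (w 1))) (kmul (u 2) (kmul (v 1) (w 0)))))))

def cvec : Fin 15 → Fin 3 → V :=
  ![![kone, kzero, kzero], ![kzero, kone, kzero], ![kzero, kzero, kone], ![kone, kone, kone],
    ![kone, kzero, kpow 10], ![kone, kone, kpow 7], ![kone, kpow 1, kpow 4], ![kone, kpow 1, kpow 9],
    ![kone, kpow 3, kpow 9], ![kone, kpow 8, kpow 1], ![kone, kpow 8, kpow 7], ![kone, kpow 10, kpow 1],
    ![kone, kpow 10, kpow 10], ![kone, kpow 12, kone], ![kone, kpow 12, kpow 11]]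

set_option maxRecDepth 100000 in
lemma hQ : ∀ i j k l : Fin 15, i < j → j < k → k < l →
    (kdet (cvec i) (cvec j) (cvec k) ≠ kzero ∨ kdet (cvec i) (cvec j) (cvec l) ≠ kzero ∨
     kdet (cvec i) (cvec k) (cvec l) ≠ kzero ∨ kdet (cvec j) (cvec k) (cvec l) ≠ kzero) := by
  decide

lemma cvec_inj : ∀ s t : Fin 15, cvec s = cvec t → s = t := by decide

variable {F : Type*} [Field F]

def psi : Bool → F := fun b => if b then 1 else 0

def phi (α : F) (v : V) : F :=
  psi v.1 + psi v.2.1 * α + psi v.2.2.1 * α ^ 2 + psi v.2.2.2 * α ^ 3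

variable {α : F}

lemma psi_and (a b : Bool) : (psi (a && b) : F) = psi a * psi b := by
  cases a <;> cases b <;> simp [psi]

lemma psi_xor (h2 : (2:F) = 0) (a b : Bool) : (psi (xor a b) : F) = psi a + psi b := by
  cases a <;> cases b <;> simp [psi] <;> linear_combination -h2

lemma phi_add (h2 : (2:F) = 0) (u v : V) : phi α (kadd u v) = phi α u + phi α v := by
  simp only [phi, kadd, psi_xor h2]; ring

lemma e4 (h2 : (2:F) = 0) (hα : α ^ 4 + α ^ 3 + 1 = 0) : α ^ 4 = α ^ 3 + 1 := by
  linear_combination hα + (-α^3 - 1) * h2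

lemma e5 (h2 : (2:F) = 0) (hα : α ^ 4 + α ^ 3 + 1 = 0) : α ^ 5 = α ^ 3 + α + 1 := by
  linear_combination (α - 1) * hα + (-α) * h2

lemma e6 (h2 : (2:F) = 0) (hα : α ^ 4 + α ^ 3 + 1 = 0) : α ^ 6 = α ^ 3 + α ^ 2 + α + 1 := by
  linear_combination α * (e5 h2 hα) + e4 h2 hα

lemma phi_mul (h2 : (2:F) = 0) (hα : α ^ 4 + α ^ 3 + 1 = 0) (u v : V) :
    phi α (kmul u v) = phi α u * phi α v := by
  obtain ⟨a0, a1, a2, a3⟩ := u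
  obtain ⟨b0, b1, b2, b3⟩ := v
  simp only [phi, kmul, psi_xor h2, psi_and]
  linear_combination (-(psi a1 * psi b3 + psi a2 * psi b2 + psi a3 * psi b1) : F) * e4 h2 hα +
    (-(psi a2 * psi b3 + psi a3 * psi b2) : F) * e5 h2 hα +
    (-(psi a3 * psi b3) : F) * e6 h2 hα

lemma phi_zero : phi α kzero = 0 := by simp [phi, kzero, psi]
lemma phi_one : phi α kone = 1 := by simp [phi, kone, psi]
lemma phi_ka : phi α ka = α := by simp [phi, ka, psi]

lemma phi_kpow (h2 : (2:F) = 0) (hα : α ^ 4 + α ^ 3 + 1 = 0) (n : ℕ) :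
    phi α (kpow n) = α ^ n := by
  induction n with
  | zero => simpa [kpow] using phi_one
  | succ n ih => rw [kpow, phi_mul h2 hα, phi_ka, ih]; ring

lemma alpha_ne_zero (hα : α ^ 4 + α ^ 3 + 1 = 0) : α ≠ 0 := by
  intro h; rw [h] at hα; norm_num at hα

lemma phi_ne_zero (h2 : (2:F) = 0) (hα : α ^ 4 + α ^ 3 + 1 = 0) (v : V) (hv : v ≠ kzero) :
    phi α v ≠ 0 := by
  obtain ⟨k, rfl⟩ : ∃ k : Fin 15, v = kpow k.val := by revert hv; revert v; decide
  rw [phi_kpow h2 hα]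
  exact pow_ne_zero _ (alpha_ne_zero hα)

lemma phi_inj (h2 : (2:F) = 0) (hα : α ^ 4 + α ^ 3 + 1 = 0) {u v : V}
    (h : phi α u = phi α v) : u = v := by
  by_contra hne
  have key : ∀ x y : V, x ≠ y → kadd x y ≠ kzero := by decide
  exact phi_ne_zero h2 hα _ (key u v hne)
    (by rw [phi_add h2, h]; linear_combination (phi α v) * h2)

lemma solve (h2 : (2:F) = 0) (hα : α ^ 4 + α ^ 3 + 1 = 0) (u v w : Fin 3 → V)
    (hne : kdet u v w ≠ kzero) (f : Fin 3 → F)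
    (hu : (fun i => phi α (u i)) ⬝ᵥ f = 0)
    (hv : (fun i => phi α (v i)) ⬝ᵥ f = 0)
    (hw : (fun i => phi α (w i)) ⬝ᵥ f = 0) : f = 0 := by
  set M : Matrix (Fin 3) (Fin 3) F :=
    Matrix.of ![fun i => phi α (u i), fun i => phi α (v i), fun i => phi α (w i)] with hM
  have hdet : M.det = phi α (kdet u v w) := by
    rw [Matrix.det_fin_three]
    simp only [kdet, phi_add h2, phi_mul h2 hα, hM, Matrix.of_apply, Matrix.cons_val_zero,
      Matrix.cons_val_one, Matrix.head_cons, Matrix.cons_val_two, Matrix.tail_cons]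
    linear_combination (-(phi α (u 0) * (phi α (v 2) * phi α (w 1)) +
      phi α (u 1) * (phi α (v 0) * phi α (w 2)) +
      phi α (u 2) * (phi α (v 1) * phi α (w 0)))) * h2
  have hMf : M *ᵥ f = 0 := by
    funext i
    fin_cases i
    · simpa [hM, Matrix.mulVec, dotProduct, Fin.sum_univ_three] using hu
    · simpa [hM, Matrix.mulVec, dotProduct, Fin.sum_univ_three] using hv
    · simpa [hM, Matrix.mulVec, dotProduct, Fin.sum_univ_three] using hw
  exact Matrix.eq_zero_of_mulVec_eq_zero
    (by rw [hdet]; exact phi_ne_zero h2 hα _ hne) hMf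

end Arc15Aux

/-- The 15 column vectors of the matrix in the paper, over a field containing a
root `α` of `x⁴ + x³ + 1`; the paper's symbol `i ≥ 1` denotes `α^(i-1)`. -/
def arcVecs (F : Type*) [Field F] (α : F) : List (Fin 3 → F) :=
  [![1, 0, 0], ![0, 1, 0], ![0, 0, 1], ![1, 1, 1],
   ![1, 0, α ^ 10], ![1, 1, α ^ 7], ![1, α, α ^ 4], ![1, α, α ^ 9],
   ![1, α ^ 3, α ^ 9], ![1, α ^ 8, α], ![1, α ^ 8, α ^ 7], ![1, α ^ 10, α],
   ![1, α ^ 10, α ^ 10], ![1, α ^ 12, 1], ![1, α ^ 12, α ^ 11]]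

/-- The 15-point set of the paper, as a set of homogeneous coordinate vectors. -/
def arcSet (F : Type*) [Field F] (α : F) : Set (Fin 3 → F) :=
  {v | v ∈ arcVecs F α}

/-- A set of (coordinate vectors of) projective points lies on a common line iff
some nonzero linear form vanishes on all of them. -/
def OnCommonLine {F : Type*} [Field F] (s : Set (Fin 3 → F)) : Prop :=
  ∃ f : Fin 3 → F, f ≠ 0 ∧ ∀ v ∈ s, v ⬝ᵥ f = 0

namespace Arc15Aux

lemma arc_eq {F : Type*} [Field F] {α : F} (h2 : (2:F) = 0) (hα : α ^ 4 + α ^ 3 + 1 = 0) :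
    arcVecs F α = List.ofFn (fun t : Fin 15 => fun i => phi α (cvec t i)) := by
  simp only [List.ofFn_succ, List.ofFn_zero, arcVecs, List.cons.injEq, and_true]
  refine ⟨?_, ?_, ?_, ?_, ?_, ?_, ?_, ?_, ?_, ?_, ?_, ?_, ?_, ?_, ?_⟩ <;>
    · funext i
      fin_cases i <;>
        simp [cvec, Matrix.vecHead, Matrix.vecTail, phi_kpow h2 hα, phi_one, phi_zero, pow_one]

lemma arcSet_eq {F : Type*} [Field F] {α : F} (h2 : (2:F) = 0) (hα : α ^ 4 + α ^ 3 + 1 = 0) :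
    arcSet F α = Set.range (fun t : Fin 15 => fun i => phi α (cvec t i)) := by
  ext v
  constructor
  · intro hv
    have : v ∈ arcVecs F α := hv
    rw [arc_eq h2 hα, List.mem_ofFn] at this
    exact this
  · intro hv
    show v ∈ arcVecs F α
    rw [arc_eq h2 hα, List.mem_ofFn]
    exact hv

end Arc15Aux

open Arc15Aux in
/-- the 15-point set of the paper is a `(15,3)`-arc in `PG(2,16)`:
it consists of 15 (projectively distinct) points, no four of them collinear. -/
theorem arc15_is_arc3 (F : Type*) [Field F] [Fintype F] (α : F)
    (hcard : Fintype.card F = 16) (hα : α ^ 4 + α ^ 3 + 1 = 0) :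
    (arcSet F α).ncard = 15 ∧
      ∀ s ⊆ arcSet F α, s.ncard = 4 → ¬ OnCommonLine s := by
  -- the field has characteristic 2
  have h2 : (2 : F) = 0 := by
    obtain ⟨n, hp, hc⟩ := FiniteField.card F (ringChar F)
    have hdvd : ringChar F ∣ 2 ^ 4 := by
      have h16 : ringChar F ∣ Fintype.card F := hc ▸ dvd_pow_self _ n.2.ne'
      rw [hcard] at h16
      exact h16
    have hr2 : ringChar F = 2 :=
      (Nat.prime_dvd_prime_iff_eq hp Nat.prime_two).mp (hp.dvd_of_dvd_pow hdvd)
    calc (2:F) = ((2:ℕ):F) := by norm_num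
      _ = ((ringChar F : ℕ) : F) := by rw [hr2]
      _ = 0 := ringChar.Nat.cast_ringChar
  set Φ : Fin 15 → (Fin 3 → F) := fun t => fun i => phi α (cvec t i) with hΦ
  have hΦinj : Function.Injective Φ := by
    intro s t h
    exact cvec_inj s t (funext fun i => phi_inj h2 hα (congrFun h i))
  have harc : arcSet F α = Set.range Φ := arcSet_eq h2 hα
  constructor
  · rw [harc, ← Set.image_univ, Set.ncard_image_of_injective _ hΦinj, Set.ncard_univ,
      Nat.card_eq_fintype_card, Fintype.card_fin]
  · rintro s hsub hs4 ⟨f, hf0, hall⟩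
    have hfin : s.Finite := Set.Finite.subset (harc ▸ Set.finite_range Φ) hsub
    obtain ⟨a, ha⟩ : s.Nonempty := Set.nonempty_of_ncard_ne_zero (by omega)
    have h3 : (s \ {a}).ncard = 3 := by
      rw [Set.ncard_diff_singleton_of_mem ha, hs4]
    obtain ⟨b, c, d, hbc, hbd, hcd, hset⟩ := Set.ncard_eq_three.mp h3
    have hbmem : b ∈ s \ {a} := hset ▸ (by simp)
    have hcmem : c ∈ s \ {a} := hset ▸ (by simp)
    have hdmem : d ∈ s \ {a} := hset ▸ (by simp)
    have hb : b ∈ s := hbmem.1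
    have hc : c ∈ s := hcmem.1
    have hd : d ∈ s := hdmem.1
    -- indices of the four points
    obtain ⟨ia, hia⟩ : ∃ t, Φ t = a := by rw [harc] at hsub; exact hsub ha
    obtain ⟨ib, hib⟩ : ∃ t, Φ t = b := by rw [harc] at hsub; exact hsub hb
    obtain ⟨ic, hic⟩ : ∃ t, Φ t = c := by rw [harc] at hsub; exact hsub hc
    obtain ⟨id, hid⟩ : ∃ t, Φ t = d := by rw [harc] at hsub; exact hsub hd
    have hab : ia ≠ ib := fun h => hbmem.2 (show b = a by rw [← hib, ← h, hia])
    have hac : ia ≠ ic := fun h => hcmem.2 (show c = a by rw [← hic, ← h, hia])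
    have had : ia ≠ id := fun h => hdmem.2 (show d = a by rw [← hid, ← h, hia])
    have hbc' : ib ≠ ic := fun h => hbc (by rw [← hib, h, hic])
    have hbd' : ib ≠ id := fun h => hbd (by rw [← hib, h, hid])
    have hcd' : ic ≠ id := fun h => hcd (by rw [← hic, h, hid])
    -- every point of the quadruple lies on the line f
    have key : ∀ x : Fin 15, x = ia ∨ x = ib ∨ x = ic ∨ x = id →
        (fun i => phi α (cvec x i)) ⬝ᵥ f = 0 := by
      rintro x (rfl | rfl | rfl | rfl)
      · rw [show (fun i => phi α (cvec x i)) = Φ x from rfl, hia]; exact hall a ha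
      · rw [show (fun i => phi α (cvec x i)) = Φ x from rfl, hib]; exact hall b hb
      · rw [show (fun i => phi α (cvec x i)) = Φ x from rfl, hic]; exact hall c hc
      · rw [show (fun i => phi α (cvec x i)) = Φ x from rfl, hid]; exact hall d hd
    -- sort the four indices
    classical
    set t : Finset (Fin 15) := {ia, ib, ic, id} with ht
    have htsub : ∀ x ∈ t, x = ia ∨ x = ib ∨ x = ic ∨ x = id := by
      intro x hx
      simpa [ht, Finset.mem_insert] using hx
    have hcardt : t.card = 4 := by
      rw [ht]
      rw [Finset.card_insert_of_notMem (by simp [hab, hac, had]),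
        Finset.card_insert_of_notMem (by simp [hbc', hbd']),
        Finset.card_insert_of_notMem (by simp [hcd']), Finset.card_singleton]
    have hlen : (t.sort (· ≤ ·)).length = 4 := by rw [Finset.length_sort, hcardt]
    obtain ⟨w1, w2, w3, w4, hL⟩ : ∃ w1 w2 w3 w4, t.sort (· ≤ ·) = [w1, w2, w3, w4] := by
      rcases hl : t.sort (· ≤ ·) with _ | ⟨x1, _ | ⟨x2, _ | ⟨x3, _ | ⟨x4, _ | ⟨x5, rest⟩⟩⟩⟩⟩ <;>
          rw [hl] at hlen <;>
          simp only [List.length_cons, List.length_nil] at hlen <;>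
          try omega
      exact ⟨x1, x2, x3, x4, rfl⟩
    have hsort := (Finset.sortedLT_sort t).pairwise
    rw [hL] at hsort
    simp only [List.pairwise_cons, List.mem_cons, List.mem_singleton, List.not_mem_nil] at hsort
    have hmem : ∀ x ∈ [w1, w2, w3, w4], x = ia ∨ x = ib ∨ x = ic ∨ x = id := by
      intro x hx
      exact htsub x ((Finset.mem_sort (α := Fin 15) (· ≤ ·)).mp (hL ▸ hx))
    have k1 := key w1 (hmem w1 (by simp))
    have k2 := key w2 (hmem w2 (by simp))
    have k3 := key w3 (hmem w3 (by simp))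
    have k4 := key w4 (hmem w4 (by simp))
    have h12 : w1 < w2 := hsort.1 w2 (by simp)
    have h23 : w2 < w3 := hsort.2.1 w3 (by simp)
    have h34 : w3 < w4 := hsort.2.2.1 w4 (by simp)
    rcases hQ w1 w2 w3 w4 h12 h23 h34 with h | h | h | h
    · exact hf0 (solve h2 hα _ _ _ h f k1 k2 k3)
    · exact hf0 (solve h2 hα _ _ _ h f k1 k2 k4)
    · exact hf0 (solve h2 hα _ _ _ h f k1 k3 k4)
    · exact hf0 (solve h2 hα _ _ _ h f k2 k3 k4)
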